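/- arXiv:1711.03247 — 2 statements merged into one kernel-verified Lean document; each statement's English description precedes it below -/
import Mathlib

section
/- Let f: ℝ^d → ℝ be symmetric convex, g(x) = f_λ(xx^T - x̄x̄^T), and suppose g(x) - g(x̄) ≥ κ‖x-x̄‖‖x+x̄‖ for all x, with κ > 0. Then every x ≠ 0 satisfies κ‖x-x̄‖‖x+x̄‖/‖x‖ - (|λ₁(V)| + |λ_d(V)|)‖x̄‖²/‖x‖ ≤ dist(0, ∂g(x)), for any V ∈ ∂f_λ(X) attaining dist(0, ∂g(x)) = ‖Vx‖. -/
open scoped InnerProductSpace Matrix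

section Aux

open Polynomial


lemma my_charpoly_conj {n R : Type*} [Fintype n] [DecidableEq n] [CommRing R]
    (P Q B : Matrix n n R) (h1 : P * Q = 1) :
    (P * B * Q).charpoly = B.charpoly := by
  set P' := (C : R →+* R[X]).mapMatrix P with hP'
  set Q' := (C : R →+* R[X]).mapMatrix Q with hQ'
  have hPQ : P' * Q' = 1 := by rw [hP', hQ', ← _root_.map_mul, h1, _root_.map_one]
  have hcm : Matrix.charmatrix (P * B * Q) = P' * Matrix.charmatrix B * Q' := by
    rw [Matrix.charmatrix, Matrix.charmatrix, mul_sub, sub_mul]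
    congr 1
    · rw [← (Matrix.scalar_commute (X : R[X]) (fun r => Commute.all _ _) P').eq,
        Matrix.mul_assoc, hPQ, Matrix.mul_one]
    · simp only [hP', hQ', ← _root_.map_mul]
  rw [Matrix.charpoly, Matrix.charpoly, hcm, Matrix.det_mul, Matrix.det_mul]
  have h3 : P'.det * Q'.det = 1 := by rw [← Matrix.det_mul, hPQ, Matrix.det_one]
  linear_combination (Matrix.charmatrix B).det * h3

lemma my_charpoly_diagonal {n R : Type*} [Fintype n] [DecidableEq n] [CommRing R] (v : n → R) :
    (Matrix.diagonal v).charpoly = ∏ i, (X - C (v i)) := by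
  rw [Matrix.charpoly]
  have h : Matrix.charmatrix (Matrix.diagonal v)
      = Matrix.diagonal fun i => (X : R[X]) - C (v i) := by
    ext i j
    by_cases h : i = j
    · subst h; simp
    · simp [Matrix.charmatrix_apply_ne _ _ _ h, Matrix.diagonal_apply_ne _ h]
  rw [h, Matrix.det_diagonal]

lemma my_charpoly_eq_prod {d : ℕ} {A : Matrix (Fin d) (Fin d) ℝ} (hA : A.IsHermitian) :
    A.charpoly = ∏ i, (X - C (hA.eigenvalues i)) := by
  have hW1 := Matrix.mem_unitaryGroup_iff.mp (hA.eigenvectorUnitary).2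
  have hs := hA.spectral_theorem
  rw [RCLike.ofReal_real_eq_id] at hs
  simp only [Function.id_comp] at hs
  conv_lhs => rw [hs]
  simp only [Unitary.conjStarAlgAut_apply, Unitary.coe_star]
  rw [my_charpoly_conj _ _ _ hW1, my_charpoly_diagonal]

lemma my_eigenvalues_multiset {d : ℕ} {A : Matrix (Fin d) (Fin d) ℝ} (hA : A.IsHermitian)
    (U : Matrix (Fin d) (Fin d) ℝ) (h1 : U * Uᵀ = 1) (l : Fin d → ℝ)
    (hdec : A = U * Matrix.diagonal l * Uᵀ) :
    Multiset.map hA.eigenvalues Finset.univ.val = Multiset.map l Finset.univ.val := by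
  have hA1 : A.charpoly = ∏ i, (X - C (l i)) := by
    rw [hdec, my_charpoly_conj _ _ _ h1, my_charpoly_diagonal]
  have hA2 := my_charpoly_eq_prod hA
  have key : (Multiset.map (fun a => X - C a) (Multiset.map hA.eigenvalues Finset.univ.val)).prod
      = (Multiset.map (fun a => X - C a) (Multiset.map l Finset.univ.val)).prod := by
    rw [Multiset.map_map, Multiset.map_map, ← Finset.prod_eq_multiset_prod,
      ← Finset.prod_eq_multiset_prod]
    simp only [Function.comp]
    rw [← hA2, ← hA1]
  have h := congrArg Polynomial.roots key
  rwa [Polynomial.roots_multiset_prod_X_sub_C, Polynomial.roots_multiset_prod_X_sub_C] at h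

lemma my_eigenvalues_zero {d : ℕ} {A : Matrix (Fin d) (Fin d) ℝ} (hA : A.IsHermitian)
    (h : A = 0) : hA.eigenvalues = fun _ => 0 := by
  subst h
  funext i
  rw [Matrix.IsHermitian.eigenvalues_eq]
  simp

section PermLemmas
open List in
lemma my_exists_comp_perm_eq {d : ℕ} {e g : Fin d → ℝ} (hg : Monotone g)
    (h : Multiset.map e Finset.univ.val = Multiset.map g Finset.univ.val) :
    ∃ σ : Equiv.Perm (Fin d), e ∘ σ = g := by
  have hl : (List.ofFn e : Multiset ℝ) = (List.ofFn g : Multiset ℝ) := by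
    simpa [Fin.univ_def, Multiset.map_coe, List.ofFn_eq_map] using h
  have hperm : List.ofFn e ~ List.ofFn g := Multiset.coe_eq_coe.mp hl
  set τ := Tuple.sort e with hτ
  have h1 : List.ofFn (e ∘ τ) ~ List.ofFn g := (τ.ofFn_comp_perm e).trans hperm
  have h3 : List.ofFn (e ∘ τ) = List.ofFn g :=
    List.Perm.eq_of_sortedLE (List.sortedLE_ofFn_iff.mpr (Tuple.monotone_sort e))
      (List.sortedLE_ofFn_iff.mpr hg) h1
  exact ⟨τ, List.ofFn_inj.mp h3⟩

lemma my_exists_comp_perm_eq' {d : ℕ} {e g : Fin d → ℝ} (hg : Antitone g)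
    (h : Multiset.map e Finset.univ.val = Multiset.map g Finset.univ.val) :
    ∃ σ : Equiv.Perm (Fin d), e ∘ σ = g := by
  have hrev : Antitone (Fin.rev : Fin d → Fin d) := fun a b hab => Fin.rev_le_rev.mpr hab
  have hmono : Monotone (g ∘ Fin.rev) := fun a b hab => hg (hrev hab)
  have hm2 : Multiset.map (g ∘ (Fin.revPerm : Equiv.Perm (Fin d))) Finset.univ.val
      = Multiset.map g Finset.univ.val := by
    have huniv : Multiset.map (⇑(Fin.revPerm : Equiv.Perm (Fin d))) Finset.univ.val
        = Finset.univ.val := congrArg Finset.val (Finset.map_univ_equiv Fin.revPerm)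
    conv_rhs => rw [← huniv, Multiset.map_map]
  have hm3 : Multiset.map e Finset.univ.val = Multiset.map (g ∘ Fin.rev) Finset.univ.val := by
    rw [h, ← hm2]; rfl
  obtain ⟨σ, hσ⟩ := my_exists_comp_perm_eq hmono hm3
  refine ⟨(Fin.revPerm : Equiv.Perm (Fin d)).trans σ, ?_⟩
  funext i
  have := congrFun hσ (Fin.rev i)
  simpa [Fin.rev_rev] using this

end PermLemmas

lemma my_conj_diag_entry {d : ℕ} (U : Matrix (Fin d) (Fin d) ℝ) (x xb : Fin d → ℝ) (i : Fin d) :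
    (Uᵀ * (Matrix.of fun i j => x i * x j - xb i * xb j) * U) i i
      = (∑ j, U j i * x j)^2 - (∑ j, U j i * xb j)^2 := by
  simp only [Matrix.mul_apply, Matrix.transpose_apply, Matrix.of_apply]
  rw [pow_two, pow_two, Finset.sum_mul_sum, Finset.sum_mul_sum, ← Finset.sum_sub_distrib]
  refine Finset.sum_congr rfl fun k _ => ?_
  simp only [Finset.sum_mul, mul_sub, sub_mul, Finset.sum_sub_distrib]
  refine congrArg₂ (· - ·) (Finset.sum_congr rfl fun j _ => by ring)
    (Finset.sum_congr rfl fun j _ => by ring)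

lemma my_quad_form {d : ℕ} (U : Matrix (Fin d) (Fin d) ℝ) (lV : Fin d → ℝ) (v : Fin d → ℝ) :
    v ⬝ᵥ ((U * Matrix.diagonal lV * Uᵀ) *ᵥ v) = ∑ i, lV i * ((Uᵀ *ᵥ v) i)^2 := by
  rw [← Matrix.mulVec_mulVec, ← Matrix.mulVec_mulVec, Matrix.dotProduct_mulVec]
  have hv : Matrix.vecMul v U = Uᵀ *ᵥ v := by
    ext i; simp [Matrix.vecMul, Matrix.mulVec, dotProduct, mul_comm]
  rw [hv]
  simp only [dotProduct, Matrix.mulVec_diagonal]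
  exact Finset.sum_congr rfl fun j _ => by ring

lemma my_norm_pres {d : ℕ} (U : Matrix (Fin d) (Fin d) ℝ) (h1 : U * Uᵀ = 1) (v : Fin d → ℝ) :
    ∑ i, ((Uᵀ *ᵥ v) i)^2 = ∑ i, (v i)^2 := by
  have h : (Uᵀ *ᵥ v) ⬝ᵥ (Uᵀ *ᵥ v) = v ⬝ᵥ v := by
    rw [Matrix.dotProduct_mulVec, Matrix.vecMul_transpose, Matrix.mulVec_mulVec, h1,
      Matrix.one_mulVec]
  simpa [dotProduct, pow_two] using h

end Aux

/-- The matrix `X = x xᵀ - xb xbᵀ`. -/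
def phaseMatrix {d : ℕ} (x xb : EuclideanSpace ℝ (Fin d)) : Matrix (Fin d) (Fin d) ℝ :=
  Matrix.of fun i j => x i * x j - xb i * xb j

theorem phaseMatrix_isHermitian {d : ℕ} (x xb : EuclideanSpace ℝ (Fin d)) :
    (phaseMatrix x xb).IsHermitian := by
  unfold Matrix.IsHermitian
  ext i j
  simp [phaseMatrix, Matrix.conjTranspose_apply, mul_comm]

/-- The spectral composite objective `g(x) = f(λ(x xᵀ - xb xbᵀ))`. -/
noncomputable def spectralObj {d : ℕ} (f : (Fin d → ℝ) → ℝ)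
    (xb : EuclideanSpace ℝ (Fin d)) (x : EuclideanSpace ℝ (Fin d)) : ℝ :=
  f ((phaseMatrix_isHermitian x xb).eigenvalues)

/-- If `g = f_λ(x xᵀ - xb xbᵀ)` is sharp with constant `κ`, then every `x ≠ 0` and every
`V ∈ ∂f_λ(X)` (presented by a simultaneous ordered spectral decomposition with `X` and a
convex subgradient inclusion `λ(V) ∈ ∂f(λ(X))`) satisfy
`κ‖x-xb‖‖x+xb‖/‖x‖ - (|λ₁(V)| + |λ_d(V)|)‖xb‖²/‖x‖ ≤ ‖Vx‖`. -/
theorem spectral_subgradient_norm_lower_bound {d : ℕ} (hd : 0 < d)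
    (f : (Fin d → ℝ) → ℝ) (hconv : ConvexOn ℝ Set.univ f)
    (hsymm : ∀ σ : Equiv.Perm (Fin d), ∀ z : Fin d → ℝ, f (z ∘ σ) = f z)
    (xb : EuclideanSpace ℝ (Fin d)) (κ : ℝ) (hκ : 0 < κ)
    (hsharp : ∀ y, spectralObj f xb y - spectralObj f xb xb ≥ κ * ‖y - xb‖ * ‖y + xb‖)
    (x : EuclideanSpace ℝ (Fin d)) (hx : x ≠ 0)
    (U : Matrix (Fin d) (Fin d) ℝ) (hU : U ∈ Matrix.orthogonalGroup (Fin d) ℝ)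
    (lX lV : Fin d → ℝ) (hlX : Antitone lX) (hlV : Antitone lV)
    (hdecX : phaseMatrix x xb = U * Matrix.diagonal lX * Uᵀ)
    (V : Matrix (Fin d) (Fin d) ℝ) (hdecV : V = U * Matrix.diagonal lV * Uᵀ)
    (hsub : ∀ z : Fin d → ℝ, f z ≥ f lX + ∑ i, lV i * (z i - lX i)) :
    κ * ‖x - xb‖ * ‖x + xb‖ / ‖x‖ - (|⨆ i, lV i| + |⨅ i, lV i|) * ‖xb‖ ^ 2 / ‖x‖ ≤
      ‖Matrix.toEuclideanLin V x‖ := by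
  haveI : Nonempty (Fin d) := ⟨⟨0, hd⟩⟩
  have hU1 : U * Uᵀ = 1 := by
    have h := Matrix.mem_unitaryGroup_iff.mp hU; simpa [Matrix.star_eq_conjTranspose] using h
  have hU2 : Uᵀ * U = 1 := by
    have h := Matrix.mem_unitaryGroup_iff'.mp hU; simpa [Matrix.star_eq_conjTranspose] using h
  set x' : Fin d → ℝ := fun i => x i with hx'
  set xb' : Fin d → ℝ := fun i => xb i with hxb'
  set S : ℝ := |⨆ i, lV i| + |⨅ i, lV i| with hS
  set N : ℝ := ‖Matrix.toEuclideanLin V x‖ with hN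
  -- diagonalization of X
  have hdiag : Matrix.diagonal lX = Uᵀ * phaseMatrix x xb * U := by
    rw [hdecX]
    symm
    calc Uᵀ * (U * Matrix.diagonal lX * Uᵀ) * U
        = (Uᵀ * U) * Matrix.diagonal lX * (Uᵀ * U) := by
          simp only [Matrix.mul_assoc]
      _ = Matrix.diagonal lX := by rw [hU2, Matrix.one_mul, Matrix.mul_one]
  have hlXi : ∀ i, lX i = ((Uᵀ *ᵥ x') i)^2 - ((Uᵀ *ᵥ xb') i)^2 := by
    intro i
    have h1 : lX i = (Uᵀ * phaseMatrix x xb * U) i i := by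
      rw [← hdiag, Matrix.diagonal_apply_eq]
    have h2 : (Uᵀ * phaseMatrix x xb * U) i i
        = (∑ j, U j i * x' j)^2 - (∑ j, U j i * xb' j)^2 :=
      my_conj_diag_entry U x' xb' i
    have h3 : ∀ v : Fin d → ℝ, (Uᵀ *ᵥ v) i = ∑ j, U j i * v j := by
      intro v; simp [Matrix.mulVec, dotProduct, Matrix.transpose_apply]
    rw [h1, h2, h3, h3]
  -- g(x) = f lX
  have gx_eq : spectralObj f xb x = f lX := by
    have hmul := my_eigenvalues_multiset (phaseMatrix_isHermitian x xb) U hU1 lX hdecX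
    obtain ⟨σ, hσ⟩ := my_exists_comp_perm_eq' hlX hmul
    rw [spectralObj, ← hsymm σ, hσ]
  -- g(xb) = f 0
  have gxb_eq : spectralObj f xb xb = f (fun _ => 0) := by
    rw [spectralObj, my_eigenvalues_zero _ (by ext i j; simp [phaseMatrix])]
  -- sharpness + subgradient at 0
  have key : κ * ‖x - xb‖ * ‖x + xb‖ ≤ ∑ i, lV i * lX i := by
    have h1 := hsharp x
    rw [gx_eq, gxb_eq] at h1
    have h3 := hsub (fun _ => 0)
    have h4 : ∑ i, lV i * ((fun _ => (0:ℝ)) i - lX i) = -∑ i, lV i * lX i := by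
      rw [← Finset.sum_neg_distrib]
      exact Finset.sum_congr rfl fun i _ => by ring
    rw [h4] at h3
    linarith
  -- trace identity
  have key2 : ∑ i, lV i * lX i = x' ⬝ᵥ (V *ᵥ x') - xb' ⬝ᵥ (V *ᵥ xb') := by
    have hq1 : x' ⬝ᵥ (V *ᵥ x') = ∑ i, lV i * ((Uᵀ *ᵥ x') i)^2 := by
      rw [hdecV]; exact my_quad_form U lV x'
    have hq2 : xb' ⬝ᵥ (V *ᵥ xb') = ∑ i, lV i * ((Uᵀ *ᵥ xb') i)^2 := by
      rw [hdecV]; exact my_quad_form U lV xb'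
    rw [hq1, hq2, ← Finset.sum_sub_distrib]
    refine Finset.sum_congr rfl fun i _ => ?_
    rw [hlXi i]; ring
  -- Cauchy-Schwarz
  have hxVx : x' ⬝ᵥ (V *ᵥ x') ≤ ‖x‖ * N := by
    have h := real_inner_le_norm x (Matrix.toEuclideanLin V x)
    have heq : ⟪x, Matrix.toEuclideanLin V x⟫_ℝ = x' ⬝ᵥ (V *ᵥ x') := by
      simp only [Matrix.toEuclideanLin_apply, PiLp.inner_apply, dotProduct,
        RCLike.inner_apply, conj_trivial]
      exact Finset.sum_congr rfl fun i _ => mul_comm _ _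
    rw [heq] at h
    exact h
  -- bound on xb quadratic form
  have hnormxb : ∑ i, (xb' i)^2 = ‖xb‖^2 := by
    rw [← real_inner_self_eq_norm_sq]
    simp only [PiLp.inner_apply, RCLike.inner_apply, conj_trivial, pow_two]
    rfl
  have hxbV : -(xb' ⬝ᵥ (V *ᵥ xb')) ≤ S * ‖xb‖^2 := by
    have hq2 : xb' ⬝ᵥ (V *ᵥ xb') = ∑ i, lV i * ((Uᵀ *ᵥ xb') i)^2 := by
      rw [hdecV]; exact my_quad_form U lV xb'
    have hSi : ∀ i, -lV i ≤ S := by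
      intro i
      have hinf : (⨅ j, lV j) ≤ lV i := ciInf_le (Set.Finite.bddBelow (Set.finite_range lV)) i
      have : -lV i ≤ |⨅ j, lV j| := le_trans (neg_le_neg hinf) (neg_le_abs _)
      exact le_trans this (le_add_of_nonneg_left (abs_nonneg _))
    calc -(xb' ⬝ᵥ (V *ᵥ xb')) = ∑ i, (-lV i) * ((Uᵀ *ᵥ xb') i)^2 := by
          rw [hq2, ← Finset.sum_neg_distrib]
          exact Finset.sum_congr rfl fun i _ => by ring
      _ ≤ ∑ i, S * ((Uᵀ *ᵥ xb') i)^2 :=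
          Finset.sum_le_sum fun i _ => mul_le_mul_of_nonneg_right (hSi i) (sq_nonneg _)
      _ = S * ∑ i, ((Uᵀ *ᵥ xb') i)^2 := by rw [Finset.mul_sum]
      _ = S * ‖xb‖^2 := by rw [my_norm_pres U hU1, hnormxb]
  -- conclude
  have hnx : (0:ℝ) < ‖x‖ := norm_pos_iff.mpr hx
  have main : κ * ‖x - xb‖ * ‖x + xb‖ ≤ ‖x‖ * N + S * ‖xb‖^2 := by linarith
  rw [div_sub_div_same, div_le_iff₀ hnx]
  linarith
end

section
/- Let f: ℝ^d → ℝ be symmetric convex and g(x) = f_λ(xx^T - x̄x̄^T) with x̄ ≠ 0. Suppose x is a stationary point of g, meaning Vx = 0 for some V ∈ ∂f_λ(X) where X = xx^T - x̄x̄^T. Then at least one of the following holds: (i) g(x) ≤ g(x̄); (ii) x = 0; (iii) ⟨x, x̄⟩ = 0 and λ₁(V) = 0 (where λ₁(V) is the largest eigenvalue of V). -/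
open scoped InnerProductSpace Matrix

open Polynomial Matrix in
lemma charpoly_orth_conj {n : ℕ} (U : Matrix (Fin n) (Fin n) ℝ)
    (hU1 : U * Uᵀ = 1) (v : Fin n → ℝ) :
    (U * Matrix.diagonal v * Uᵀ).charpoly = ∏ i, (X - C (v i)) := by
  have key : charmatrix (U * Matrix.diagonal v * Uᵀ)
      = C.mapMatrix U * charmatrix (Matrix.diagonal v) * C.mapMatrix Uᵀ := by
    unfold charmatrix
    rw [mul_sub, sub_mul, ← _root_.map_mul (C.mapMatrix), ← _root_.map_mul (C.mapMatrix)]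
    congr 1
    rw [mul_assoc, (scalar_commute (X : ℝ[X]) (Commute.all _) (C.mapMatrix Uᵀ)).eq,
      ← mul_assoc, ← _root_.map_mul (C.mapMatrix), hU1, _root_.map_one, one_mul]
  have hdiag : charmatrix (Matrix.diagonal v) = Matrix.diagonal fun i => (X : ℝ[X]) - C (v i) := by
    ext i j
    by_cases h : i = j
    · subst h; simp
    · simp [charmatrix_apply_ne _ _ _ h, Matrix.diagonal_apply_ne _ h]
  have hdet1 : (C.mapMatrix U).det * (C.mapMatrix Uᵀ).det = 1 := by
    rw [← det_mul, ← _root_.map_mul, hU1, _root_.map_one, det_one]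
  rw [Matrix.charpoly, key, det_mul, det_mul, mul_comm, ← mul_assoc,
    mul_comm ((C.mapMatrix Uᵀ).det), hdet1, one_mul, hdiag, det_diagonal]

open Polynomial in
lemma roots_prod_tuple {n : ℕ} (v : Fin n → ℝ) :
    (∏ i, (X - C (v i))).roots = Multiset.map v Finset.univ.val := by
  rw [Finset.prod_eq_multiset_prod]
  have : Multiset.map (fun i => X - C (v i)) Finset.univ.val
      = Multiset.map (fun r => X - C r) (Multiset.map v Finset.univ.val) := by
    rw [Multiset.map_map]; rfl
  rw [this, roots_multiset_prod_X_sub_C]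

open Matrix in
lemma conj_entry {n : ℕ} (U : Matrix (Fin n) (Fin n) ℝ) (u v : Fin n → ℝ) (i j : Fin n) :
    (Uᵀ * Matrix.vecMulVec u v * U) i j = (Uᵀ *ᵥ u) i * (Uᵀ *ᵥ v) j := by
  rw [Matrix.mul_apply]
  simp_rw [Matrix.mul_apply, Matrix.vecMulVec_apply, Matrix.mulVec, dotProduct,
    Matrix.transpose_apply]
  rw [Finset.sum_mul_sum, Finset.sum_comm]
  refine Finset.sum_congr rfl fun k _ => ?_
  rw [Finset.sum_mul]
  exact Finset.sum_congr rfl fun m _ => by ring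

open Matrix in
lemma eig_multiset {n : ℕ} {A : Matrix (Fin n) (Fin n) ℝ} (hA : A.IsHermitian)
    {U : Matrix (Fin n) (Fin n) ℝ} (hU1 : U * Uᵀ = 1)
    {l : Fin n → ℝ} (hdec : A = U * Matrix.diagonal l * Uᵀ) :
    Multiset.map hA.eigenvalues Finset.univ.val = Multiset.map l Finset.univ.val := by
  have h1 : A.charpoly = ∏ i, (Polynomial.X - Polynomial.C (l i)) := by
    rw [hdec]; exact charpoly_orth_conj U hU1 l
  set W := (Matrix.IsHermitian.eigenvectorUnitary hA : Matrix (Fin n) (Fin n) ℝ) with hWdef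
  have hW1 : W * Wᵀ = 1 := by
    have := Matrix.mem_unitaryGroup_iff.mp (Matrix.IsHermitian.eigenvectorUnitary hA).2
    rwa [Matrix.star_eq_conjTranspose, Matrix.conjTranspose_eq_transpose_of_trivial] at this
  have hdec2 : A = W * Matrix.diagonal hA.eigenvalues * Wᵀ := by
    have h := hA.spectral_theorem
    rwa [Unitary.conjStarAlgAut_apply, Matrix.star_eq_conjTranspose,
      Matrix.conjTranspose_eq_transpose_of_trivial] at h
  have h2 : A.charpoly = ∏ i, (Polynomial.X - Polynomial.C (hA.eigenvalues i)) :=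
    (congrArg Matrix.charpoly hdec2).trans (charpoly_orth_conj W hW1 _)
  have h3 := congrArg Polynomial.roots (h2.symm.trans h1)
  rwa [roots_prod_tuple, roots_prod_tuple] at h3

lemma exists_eq_comp_perm {n : ℕ} {a b : Fin n → ℝ}
    (h : Multiset.map a Finset.univ.val = Multiset.map b Finset.univ.val) :
    ∃ σ : Equiv.Perm (Fin n), a = b ∘ σ := by
  have hperm : List.Perm (List.ofFn (a ∘ Tuple.sort a)) (List.ofFn (b ∘ Tuple.sort b)) := by
    refine ((Tuple.sort a).ofFn_comp_perm a).trans (List.Perm.trans ?_ ((Tuple.sort b).ofFn_comp_perm b).symm)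
    rw [← Multiset.coe_eq_coe, ← Fin.univ_val_map, ← Fin.univ_val_map]
    exact h
  have key : a ∘ Tuple.sort a = b ∘ Tuple.sort b :=
    List.ofFn_injective (hperm.eq_of_sortedLE
      (Tuple.monotone_sort a).sortedLE_ofFn (Tuple.monotone_sort b).sortedLE_ofFn)
  refine ⟨((Tuple.sort a).symm.trans (Tuple.sort b)), funext fun i => ?_⟩
  have h2 := congrFun key ((Tuple.sort a).symm i)
  simpa using h2

/-- Stationary point inclusion: if `Vx = 0` for some `V ∈ ∂f_λ(X)` (presented by a
simultaneous ordered spectral decomposition with `X = x xᵀ - xb xbᵀ` and the convex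
subgradient inclusion `λ(V) ∈ ∂f(λ(X))`), then `g(x) ≤ g(xb)`, or `x = 0`, or
`⟨x, xb⟩ = 0` and `λ₁(V) = 0`. -/
theorem stationary_point_inclusion {d : ℕ} (hd : 0 < d)
    (f : (Fin d → ℝ) → ℝ) (hconv : ConvexOn ℝ Set.univ f)
    (hsymm : ∀ σ : Equiv.Perm (Fin d), ∀ z : Fin d → ℝ, f (z ∘ σ) = f z)
    (xb : EuclideanSpace ℝ (Fin d)) (hxb : xb ≠ 0)
    (x : EuclideanSpace ℝ (Fin d))
    (U : Matrix (Fin d) (Fin d) ℝ) (hU : U ∈ Matrix.orthogonalGroup (Fin d) ℝ)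
    (lX lV : Fin d → ℝ) (hlX : Antitone lX) (hlV : Antitone lV)
    (hdecX : phaseMatrix x xb = U * Matrix.diagonal lX * Uᵀ)
    (V : Matrix (Fin d) (Fin d) ℝ) (hdecV : V = U * Matrix.diagonal lV * Uᵀ)
    (hsub : ∀ z : Fin d → ℝ, f z ≥ f lX + ∑ i, lV i * (z i - lX i))
    (hstat : Matrix.toEuclideanLin V x = 0) :
    spectralObj f xb x ≤ spectralObj f xb xb ∨ x = 0 ∨
      (⟪x, xb⟫_ℝ = 0 ∧ (⨆ i, lV i) = 0) := by
  classical
  haveI : Nonempty (Fin d) := ⟨⟨0, hd⟩⟩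
  have hU1 : U * Uᵀ = 1 := by
    have h := (Matrix.mem_orthogonalGroup_iff (Fin d) ℝ).mp hU
    exact h
  have hU2 : Uᵀ * U = 1 := by
    have h := (Matrix.mem_orthogonalGroup_iff' (Fin d) ℝ).mp hU
    exact h
  set a : Fin d → ℝ := Uᵀ.mulVec x with ha
  set b : Fin d → ℝ := Uᵀ.mulVec xb with hb
  -- V x = 0 as mulVec
  have hVx : V.mulVec x = 0 := by
    have h := congrArg (WithLp.equiv 2 (Fin d → ℝ)) hstat
    change V *ᵥ x.ofLp = WithLp.equiv 2 (Fin d → ℝ) 0 at h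
    simpa using h
  -- diagonal action
  have hlVa : ∀ i, lV i * a i = 0 := by
    have hUV : Uᵀ * V = Matrix.diagonal lV * Uᵀ := by
      rw [hdecV, ← Matrix.mul_assoc, ← Matrix.mul_assoc, hU2, Matrix.one_mul]
    have hz : Matrix.diagonal lV *ᵥ a = 0 := by
      rw [ha, Matrix.mulVec_mulVec, ← hUV, ← Matrix.mulVec_mulVec, hVx, Matrix.mulVec_zero]
    intro i
    have := congrFun hz i
    rwa [Matrix.mulVec_diagonal] at this
  -- entries
  have hXd : Uᵀ * (phaseMatrix x xb) * U = Matrix.diagonal lX := by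
    rw [hdecX]
    have : Uᵀ * (U * Matrix.diagonal lX * Uᵀ) * U
        = (Uᵀ * U) * Matrix.diagonal lX * (Uᵀ * U) := by noncomm_ring
    rw [this, hU2, Matrix.one_mul, Matrix.mul_one]
  have hpm : phaseMatrix x xb
      = Matrix.vecMulVec (x : Fin d → ℝ) x - Matrix.vecMulVec (xb : Fin d → ℝ) xb := by
    ext i j
    simp [phaseMatrix, Matrix.vecMulVec_apply]
  have hXent : ∀ i j, a i * a j - b i * b j = Matrix.diagonal lX i j := by
    intro i j
    have h := congrFun (congrFun hXd i) j
    rw [hpm, Matrix.mul_sub, Matrix.sub_mul, Matrix.sub_apply, conj_entry, conj_entry] at h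
    exact h
  have hlXab : ∀ i, lX i = a i * a i - b i * b i := by
    intro i
    have := hXent i i
    rwa [Matrix.diagonal_apply_eq, eq_comm] at this
  -- inner product
  have hinner : ⟪x, xb⟫_ℝ = ∑ i, a i * b i := by
    have h1 : ⟪x, xb⟫_ℝ = dotProduct (x : Fin d → ℝ) xb := by
      rw [PiLp.inner_apply]
      simp [dotProduct, mul_comm]
    have h2 : ∑ i, a i * b i = dotProduct a b := rfl
    rw [h1, h2, ha, hb, Matrix.mulVec_transpose, Matrix.dotProduct_mulVec,
      Matrix.vecMul_vecMul, hU1, Matrix.vecMul_one]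
  -- x recovery
  have hxa : (x : Fin d → ℝ) = U *ᵥ a := by
    rw [ha, Matrix.mulVec_mulVec, hU1, Matrix.one_mulVec]
  by_cases hcase : 0 ≤ ∑ i, lV i * (b i) ^ 2
  · left
    have hEx : spectralObj f xb x = f lX := by
      obtain ⟨σ, hσ⟩ := exists_eq_comp_perm (eig_multiset (phaseMatrix_isHermitian x xb) hU1 hdecX)
      rw [spectralObj, hσ, hsymm]
    have hExb : spectralObj f xb xb = f (fun _ => 0) := by
      have h0 : phaseMatrix xb xb
          = (1 : Matrix (Fin d) (Fin d) ℝ) * Matrix.diagonal (fun _ => (0 : ℝ))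
            * (1 : Matrix (Fin d) (Fin d) ℝ)ᵀ := by
        ext i j
        simp [phaseMatrix, Matrix.diagonal]
      obtain ⟨σ, hσ⟩ := exists_eq_comp_perm
        (eig_multiset (phaseMatrix_isHermitian xb xb) (by simp) h0)
      rw [spectralObj, hσ]
      exact hsymm σ _
    rw [hEx, hExb]
    have hsub0 := hsub (fun _ => 0)
    have hVX : ∑ i, lV i * ((fun _ => (0:ℝ)) i - lX i) = ∑ i, lV i * (b i) ^ 2 := by
      refine Finset.sum_congr rfl fun i _ => ?_
      have h1 := hlXab i
      have h2 := hlVa i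
      have h3 : lV i * (a i * a i) = 0 := by rw [← mul_assoc, h2, zero_mul]
      rw [h1]
      ring_nf
      nlinarith [h3]
    rw [hVX] at hsub0
    linarith
  · push_neg at hcase
    obtain ⟨i, -, hi⟩ := Finset.exists_lt_of_sum_lt (g := fun _ => (0:ℝ)) (by simpa using hcase)
    have hbi : b i ≠ 0 := by
      intro h
      rw [h] at hi
      simp at hi
    have hlVi : lV i < 0 := by nlinarith [sq_nonneg (b i), sq_abs (b i)]
    have hai : a i = 0 := ((mul_eq_zero.mp (hlVa i)).resolve_left (ne_of_lt hlVi))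
    have hbj : ∀ j, j ≠ i → b j = 0 := by
      intro j hj
      have h := hXent j i
      rw [Matrix.diagonal_apply_ne _ hj, hai, mul_zero, zero_sub, neg_eq_zero] at h
      exact (mul_eq_zero.mp h).resolve_right hbi
    by_cases hx0 : ∀ j, a j = 0
    · right; left
      have ha0 : a = 0 := funext hx0
      have hx' : (x : Fin d → ℝ) = 0 := by rw [hxa, ha0, Matrix.mulVec_zero]
      exact (WithLp.ofLp_eq_zero (p := 2)).mp hx'
    · right; right
      push_neg at hx0
      obtain ⟨j, hj⟩ := hx0
      have hji : j ≠ i := fun h => hj (h ▸ hai)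
      have hlVj : lV j = 0 := (mul_eq_zero.mp (hlVa j)).resolve_right hj
      have hbj0 := hbj j hji
      have hlXj : 0 < lX j := by
        have := hlXab j
        rw [hbj0] at this
        nlinarith [mul_self_pos.mpr hj]
      refine ⟨?_, ?_⟩
      · rw [hinner]
        have hz : ∀ k ∈ Finset.univ, a k * b k = 0 := by
          intro k _
          by_cases hk : k = i
          · subst hk; rw [hai, zero_mul]
          · rw [hbj k hk, mul_zero]
        exact Finset.sum_eq_zero hz
      · have hle : ∀ k, lV k ≤ 0 := by
          intro k
          by_contra hpos
          push_neg at hpos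
          have hki : k ≠ i := fun h => absurd (h ▸ hpos) (not_lt.mpr (le_of_lt hlVi))
          have hak : a k = 0 := (mul_eq_zero.mp (hlVa k)).resolve_left (ne_of_gt hpos)
          have hbk := hbj k hki
          have hlXk : lX k = 0 := by
            have := hlXab k
            rw [hak, hbk] at this
            simpa using this
          have hkj : j < k := by
            by_contra hkj
            push_neg at hkj
            have := hlX hkj
            rw [hlXk] at this
            exact absurd this (not_le.mpr hlXj)
          have := hlV (le_of_lt hkj)
          rw [hlVj] at this
          exact absurd this (not_le.mpr hpos)
        apply le_antisymm
        · exact ciSup_le hle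
        · rw [← hlVj]
          exact le_ciSup (Set.Finite.bddAbove (Set.finite_range lV)) j
end
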